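/- (Levi's theorem / Lebesgue monotone convergence theorem for abstract σ-algebras.) Let Σ be an abstract σ-algebra with measure μ, and let f and fₙ (n ∈ ℕ) be nonnegative measurable functions on Σ such that fₙ ≤ fₙ₊₁ ≤ f for all n and, for every t ∈ ℝ≥0∞, f (Set.Iic t) is a greatest lower bound of {fₙ (Set.Iic t) | n ∈ ℕ} (i.e. fₙ ↗ f). Then ⨆ n, ∫ fₙ dμ = ∫ f dμ; equivalently limₙ ∫ fₙ dμ = ∫ f dμ in ℝ≥0∞. -/

import Mathlib

open scoped ENNReal

/-- A nonnegative measurable function on an abstract σ-algebra `A`: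
a morphism of abstract σ-algebras from the Borel σ-algebra of `[0,∞]` to `A`,
encoded as a map on sets constrained on Borel sets. -/
structure NNMeasFun (A : Type*) [BooleanAlgebra A] where
  toFun : Set ℝ≥0∞ → A
  map_empty : toFun ∅ = ⊥
  map_univ : toFun Set.univ = ⊤
  map_compl : ∀ s : Set ℝ≥0∞, MeasurableSet s → toFun sᶜ = (toFun s)ᶜ
  map_inter : ∀ s t : Set ℝ≥0∞, MeasurableSet s → MeasurableSet t →
    toFun (s ∩ t) = toFun s ⊓ toFun t
  map_iUnion : ∀ s : ℕ → Set ℝ≥0∞, (∀ n, MeasurableSet (s n)) →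
    IsLUB (Set.range fun n => toFun (s n)) (toFun (⋃ n, s n))

/-- Simple data on `A`: a pairwise disjoint finite family with supremum `⊤`,
together with values in `[0,∞]`. -/
structure SimpleData (A : Type*) [BooleanAlgebra A] where
  m : ℕ
  a : Fin m → A
  x : Fin m → ℝ≥0∞
  disjoint : ∀ i j, i ≠ j → a i ⊓ a j = ⊥
  sup_eq_top : Finset.univ.sup a = ⊤

open scoped Classical in
/-- The simple nonnegative measurable function induced by simple data. -/
noncomputable def SimpleData.toFun {A : Type*} [BooleanAlgebra A] (d : SimpleData A)
    (b : Set ℝ≥0∞) : A :=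
  (Finset.univ.filter fun i => d.x i ∈ b).sup d.a

/-- The point-free integral of `f` with respect to `μ`: the supremum of the
integrals of simple functions lying below `f`. -/
noncomputable def pfIntegral {A : Type*} [BooleanAlgebra A] (μ : A → ℝ≥0∞)
    (f : Set ℝ≥0∞ → A) : ℝ≥0∞ :=
  ⨆ (d : SimpleData A) (_ : ∀ t : ℝ≥0∞, f (Set.Iic t) ≤ d.toFun (Set.Iic t)),
    ∑ i, μ (d.a i) * d.x i

section Aux

variable {A : Type*} [BooleanAlgebra A]

/-- In a Boolean algebra, meet distributes over existing least upper bounds. -/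
lemma aux_inf_isLUB {s : ℕ → A} {b : A} (h : IsLUB (Set.range s) b) (a : A) :
    IsLUB (Set.range fun n => a ⊓ s n) (a ⊓ b) := by
  constructor
  · rintro _ ⟨n, rfl⟩
    exact inf_le_inf_left a (h.1 ⟨n, rfl⟩)
  · rintro u hu
    have h1 : ∀ n, s n ≤ u ⊔ aᶜ := fun n => by
      have h2 : a ⊓ s n ≤ u := hu ⟨n, rfl⟩
      have h3 : s n = a ⊓ s n ⊔ aᶜ ⊓ s n := by
        rw [← inf_sup_right, sup_compl_eq_top, top_inf_eq]
      rw [h3]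
      exact sup_le (le_sup_of_le_left h2) (le_sup_of_le_right inf_le_left)
    have h3 : b ≤ u ⊔ aᶜ := h.2 (by rintro _ ⟨n, rfl⟩; exact h1 n)
    calc a ⊓ b ≤ a ⊓ (u ⊔ aᶜ) := inf_le_inf_left a h3
      _ = a ⊓ u ⊔ a ⊓ aᶜ := inf_sup_left a u aᶜ
      _ ≤ u := by rw [inf_compl_eq_bot, sup_bot_eq]; exact inf_le_right

lemma aux_isLUB_compl {s : ℕ → A} {b : A} (h : IsGLB (Set.range s) b) :
    IsLUB (Set.range fun n => (s n)ᶜ) bᶜ := by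
  constructor
  · rintro _ ⟨n, rfl⟩
    exact compl_le_compl (h.1 ⟨n, rfl⟩)
  · rintro u hu
    have h1 : uᶜ ≤ b := by
      refine h.2 ?_
      rintro _ ⟨n, rfl⟩
      have := hu ⟨n, rfl⟩
      exact compl_le_of_compl_le this
    have := compl_le_compl h1
    rwa [compl_compl] at this

variable {μ : A → ℝ≥0∞}

lemma aux_add (h0 : μ ⊥ = 0)
    (hμ : ∀ a : ℕ → A, (∀ i j, i ≠ j → a i ⊓ a j = ⊥) →
      ∀ s, IsLUB (Set.range a) s → μ s = ∑' n, μ (a n))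
    {a b : A} (hab : a ⊓ b = ⊥) : μ (a ⊔ b) = μ a + μ b := by
  let s : ℕ → A := fun n => match n with | 0 => a | 1 => b | _ => ⊥
  have hd : ∀ i j, i ≠ j → s i ⊓ s j = ⊥ := by
    intro i j hij
    match i, j with
    | 0, 0 => exact absurd rfl hij
    | 1, 1 => exact absurd rfl hij
    | 0, 1 => exact hab
    | 1, 0 => rw [show s 1 ⊓ s 0 = b ⊓ a from rfl, inf_comm]; exact hab
    | (k+2), j => exact bot_inf_eq _
    | 0, (k+2) => exact inf_bot_eq _
    | 1, (k+2) => exact inf_bot_eq _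
  have hlub : IsLUB (Set.range s) (a ⊔ b) := by
    constructor
    · rintro _ ⟨n, rfl⟩
      match n with
      | 0 => exact le_sup_left
      | 1 => exact le_sup_right
      | (k+2) => exact bot_le
    · intro u hu
      exact sup_le (hu ⟨0, rfl⟩) (hu ⟨1, rfl⟩)
  rw [hμ s hd _ hlub, tsum_eq_sum (s := {0, 1}) (f := fun n => μ (s n)) ?_]
  · rw [Finset.sum_pair (by norm_num)]; rfl
  · intro n hn
    match n, hn with
    | 0, hn => simp at hn
    | 1, hn => simp at hn
    | (k+2), _ => exact h0

lemma aux_mono (h0 : μ ⊥ = 0)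
    (hμ : ∀ a : ℕ → A, (∀ i j, i ≠ j → a i ⊓ a j = ⊥) →
      ∀ s, IsLUB (Set.range a) s → μ s = ∑' n, μ (a n))
    {a b : A} (h : a ≤ b) : μ a ≤ μ b := by
  have h1 : a ⊓ b \ a = ⊥ := inf_sdiff_self_right
  have h2 : a ⊔ b \ a = b := sup_sdiff_cancel_right h
  rw [← h2, aux_add h0 hμ h1]
  exact le_self_add

/-- Continuity from below of the measure. -/
lemma aux_continuity (h0 : μ ⊥ = 0)
    (hμ : ∀ a : ℕ → A, (∀ i j, i ≠ j → a i ⊓ a j = ⊥) →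
      ∀ s, IsLUB (Set.range a) s → μ s = ∑' n, μ (a n))
    {u : ℕ → A} (hm : Monotone u) {b : A}
    (hb : IsLUB (Set.range u) b) : ⨆ n, μ (u n) = μ b := by
  let c : ℕ → A := fun n => match n with | 0 => u 0 | (k+1) => u (k+1) \ u k
  have hcle : ∀ n, c n ≤ u n := by
    intro n
    match n with
    | 0 => exact le_rfl
    | (k+1) => exact sdiff_le
  have hsum : ∀ n, μ (u n) = ∑ k ∈ Finset.range (n+1), μ (c k) := by
    intro n
    induction n with
    | zero => simp [c]
    | succ k ih =>
      have hdk : u k ⊓ c (k+1) = ⊥ := inf_sdiff_self_right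
      have hsk : u k ⊔ c (k+1) = u (k+1) := sup_sdiff_cancel_right (hm k.le_succ)
      rw [Finset.sum_range_succ, ← ih, ← aux_add h0 hμ hdk, hsk]
  have hdisj : ∀ i j, i ≠ j → c i ⊓ c j = ⊥ := by
    have key : ∀ i j, i < j → c i ⊓ c j = ⊥ := by
      intro i j hij
      match j, hij with
      | (l+1), hij =>
        have h1 : c i ≤ u l := (hcle i).trans (hm (Nat.lt_succ_iff.mp hij))
        have h2 : c i ⊓ c (l+1) ≤ u l ⊓ (u (l+1) \ u l) := inf_le_inf h1 le_rfl
        rw [inf_sdiff_self_right] at h2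
        exact le_bot_iff.mp h2
    intro i j hij
    rcases Ne.lt_or_gt hij with h | h
    · exact key _ _ h
    · rw [inf_comm]; exact key _ _ h
  have hlub : IsLUB (Set.range c) b := by
    constructor
    · rintro _ ⟨n, rfl⟩
      exact (hcle n).trans (hb.1 ⟨n, rfl⟩)
    · intro v hv
      have hun : ∀ n, u n ≤ v := by
        intro n
        induction n with
        | zero => exact hv ⟨0, rfl⟩
        | succ k ih =>
          rw [← sup_sdiff_cancel_right (hm k.le_succ)]
          exact sup_le ih (hv ⟨k+1, rfl⟩)
      exact hb.2 (by rintro _ ⟨n, rfl⟩; exact hun n)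
  rw [hμ c hdisj b hlub, ENNReal.tsum_eq_iSup_nat]
  apply le_antisymm
  · exact iSup_le fun n => (hsum n).le.trans
      (le_iSup (fun n => ∑ k ∈ Finset.range n, μ (c k)) (n+1))
  · refine iSup_le fun n => ?_
    calc ∑ k ∈ Finset.range n, μ (c k) ≤ ∑ k ∈ Finset.range (n+1), μ (c k) :=
          Finset.sum_le_sum_of_subset (Finset.range_subset_range.mpr n.le_succ)
      _ = μ (u n) := (hsum n).symm
      _ ≤ ⨆ n, μ (u n) := le_iSup (fun n => μ (u n)) n

lemma aux_nnmeas_mono (f : NNMeasFun A) {s t : Set ℝ≥0∞}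
    (hs : MeasurableSet s) (ht : MeasurableSet t) (h : s ⊆ t) :
    f.toFun s ≤ f.toFun t := by
  have h1 := f.map_inter s t hs ht
  rw [Set.inter_eq_self_of_subset_left h] at h1
  exact h1.le.trans inf_le_right

end Aux

/-- A monotone sequence of thresholds strictly below `x` with supremum `x`. -/
noncomputable def thr (x : ℝ≥0∞) (k : ℕ) : ℝ≥0∞ := if x = ∞ then k else x - x / (k+1)

lemma thr_mono (x : ℝ≥0∞) : Monotone (thr x) := by
  intro i j hij
  unfold thr
  split_ifs with h
  · exact_mod_cast Nat.cast_le.mpr hij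
  · refine tsub_le_tsub_left (ENNReal.div_le_div_left ?_ x) x
    exact_mod_cast add_le_add_left (Nat.cast_le.mpr hij) 1

lemma thr_lt (x : ℝ≥0∞) (hx : x ≠ 0) (k : ℕ) : thr x k < x := by
  unfold thr
  split_ifs with h
  · rw [h]; exact ENNReal.natCast_lt_top k
  · refine ENNReal.sub_lt_self h hx ?_
    simp only [ne_eq, ENNReal.div_eq_zero_iff, hx, false_or]
    exact fun hc => (ENNReal.add_eq_top.mp hc).elim
      (fun h' => (ENNReal.natCast_lt_top k).ne h') (by norm_num)

lemma thr_zero (k : ℕ) : thr 0 k = 0 := by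
  unfold thr
  norm_num

lemma thr_iSup (x : ℝ≥0∞) : ⨆ k, thr x k = x := by
  unfold thr
  split_ifs with h
  · rw [h]; exact ENNReal.iSup_natCast
  · rw [← ENNReal.sub_iInf]
    have h1 : ⨅ k : ℕ, x / ((k : ℝ≥0∞) + 1) = 0 := by
      have h2 : ∀ k : ℕ, x / ((k : ℝ≥0∞) + 1) = x * ((k : ℝ≥0∞) + 1)⁻¹ := fun k =>
        ENNReal.div_eq_inv_mul.trans (mul_comm _ _)
      simp only [h2]
      have h3 : ⨆ k : ℕ, ((k : ℝ≥0∞) + 1) = ∞ := by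
        rw [← top_le_iff, ← ENNReal.iSup_natCast]
        exact iSup_mono fun k => le_self_add
      have h4 : ⨅ k : ℕ, ((k : ℝ≥0∞) + 1)⁻¹ = 0 := by
        rw [← ENNReal.inv_iSup, h3, ENNReal.inv_top]
      rw [← ENNReal.mul_iInf (fun hx => absurd hx h), h4, mul_zero]
    rw [h1, tsub_zero]

theorem monotone_convergence {A : Type*} [BooleanAlgebra A]
    (hA : ∀ a : ℕ → A, ∃ s, IsLUB (Set.range a) s)
    (μ : A → ℝ≥0∞) (h0 : μ ⊥ = 0)
    (hμ : ∀ a : ℕ → A, (∀ i j, i ≠ j → a i ⊓ a j = ⊥) →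
      ∀ s, IsLUB (Set.range a) s → μ s = ∑' n, μ (a n))
    (f : NNMeasFun A) (g : ℕ → NNMeasFun A)
    (hmono : ∀ (n : ℕ) (t : ℝ≥0∞),
      (g (n + 1)).toFun (Set.Iic t) ≤ (g n).toFun (Set.Iic t))
    (hle : ∀ (n : ℕ) (t : ℝ≥0∞), f.toFun (Set.Iic t) ≤ (g n).toFun (Set.Iic t))
    (hglb : ∀ t : ℝ≥0∞,
      IsGLB (Set.range fun n => (g n).toFun (Set.Iic t)) (f.toFun (Set.Iic t))) :
    ⨆ n, pfIntegral μ (g n).toFun = pfIntegral μ f.toFun := by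
  classical
  apply le_antisymm
  · -- easy direction
    refine iSup_le fun n => ?_
    simp only [pfIntegral]
    exact iSup₂_le fun d hd => le_iSup₂_of_le d (fun t => (hle n t).trans (hd t)) le_rfl
  · -- hard direction
    conv_lhs => rw [pfIntegral]
    refine iSup₂_le fun d hd => ?_
    -- antitonicity of g in n
    have hganti : ∀ t : ℝ≥0∞, Antitone fun n => (g n).toFun (Set.Iic t) := fun t =>
      antitone_nat_of_succ_le fun n => hmono n t
    -- the approximating pieces
    set B : ℕ → ℕ → Fin d.m → A := fun k n i =>
      d.a i ⊓ ((g n).toFun (Set.Iic (thr (d.x i) k)))ᶜ with hB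
    have hBle : ∀ k n i, B k n i ≤ d.a i := fun k n i => inf_le_left
    have hBmono : ∀ k i, Monotone fun n => B k n i := by
      intro k i n1 n2 hn
      exact inf_le_inf_left _ (compl_le_compl (hganti _ hn))
    -- LUB of the pieces
    have hBlub : ∀ k i, d.x i ≠ 0 →
        IsLUB (Set.range fun n => B k n i) (d.a i) := by
      intro k i hx
      have h1 := aux_inf_isLUB (aux_isLUB_compl (hglb (thr (d.x i) k))) (d.a i)
      have h2 : d.a i ⊓ (f.toFun (Set.Iic (thr (d.x i) k)))ᶜ = d.a i := by
        have h3 : d.a i ⊓ f.toFun (Set.Iic (thr (d.x i) k)) = ⊥ := by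
          have h4 : d.a i ⊓ d.toFun (Set.Iic (thr (d.x i) k)) = ⊥ := by
            rw [SimpleData.toFun, Finset.sup_inf_distrib_left]
            refine le_bot_iff.mp (Finset.sup_le fun j hj => ?_)
            simp only [Finset.mem_filter, Set.mem_Iic] at hj
            have hji : i ≠ j := by
              rintro rfl
              exact absurd hj.2 (not_le.mpr (thr_lt _ hx k))
            exact (d.disjoint i j hji).le
          exact le_bot_iff.mp ((inf_le_inf_left _ (hd _)).trans h4.le)
        exact inf_eq_left.mpr (le_compl_iff_disjoint_right.mpr (disjoint_iff.mpr h3))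
      rw [← h2]
      exact h1
    -- the integral lower bound for each (k, n)
    have claim1 : ∀ k n, ∑ i, μ (B k n i) * thr (d.x i) k ≤
        ⨆ m, pfIntegral μ (g m).toFun := by
      intro k n
      set r : A := (Finset.univ.sup (B k n))ᶜ with hr
      have hkey : ∀ i : Fin d.m, B k n i ⊓ r = ⊥ := by
        intro i
        refine le_bot_iff.mp ?_
        calc B k n i ⊓ r ≤ Finset.univ.sup (B k n) ⊓ r :=
              inf_le_inf_right r (Finset.le_sup (Finset.mem_univ i))
          _ = ⊥ := inf_compl_eq_bot
      have hsupcons : Finset.univ.sup (Fin.cons r (B k n) : Fin (d.m+1) → A) =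
          r ⊔ Finset.univ.sup (B k n) := by
        apply le_antisymm
        · refine Finset.sup_le fun j _ => ?_
          induction j using Fin.cases with
          | zero => rw [Fin.cons_zero]; exact le_sup_left
          | succ i => rw [Fin.cons_succ]; exact le_sup_of_le_right (Finset.le_sup (Finset.mem_univ i))
        · refine sup_le ?_ (Finset.sup_le fun i _ => ?_)
          · have : (Fin.cons r (B k n) : Fin (d.m+1) → A) 0 = r := Fin.cons_zero _ _
            rw [← this]; exact Finset.le_sup (Finset.mem_univ 0)
          · have : (Fin.cons r (B k n) : Fin (d.m+1) → A) i.succ = B k n i := Fin.cons_succ _ _ _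
            rw [← this]; exact Finset.le_sup (Finset.mem_univ i.succ)
      have hdisj' : ∀ i j : Fin (d.m+1), i ≠ j →
          (Fin.cons r (B k n) : Fin (d.m+1) → A) i ⊓ (Fin.cons r (B k n) : Fin (d.m+1) → A) j = ⊥ := by
        intro i j hij
        induction i using Fin.cases with
        | zero =>
          induction j using Fin.cases with
          | zero => exact absurd rfl hij
          | succ j => rw [Fin.cons_zero, Fin.cons_succ, inf_comm]; exact hkey j
        | succ i =>
          induction j using Fin.cases with
          | zero => rw [Fin.cons_zero, Fin.cons_succ]; exact hkey i
          | succ j =>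
            rw [Fin.cons_succ, Fin.cons_succ]
            refine le_bot_iff.mp ((inf_le_inf (hBle k n i) (hBle k n j)).trans ?_)
            exact (d.disjoint i j (fun h => hij (by rw [h]))).le
      have hsup' : Finset.univ.sup (Fin.cons r (B k n) : Fin (d.m+1) → A) = ⊤ := by
        rw [hsupcons, compl_sup_eq_top]
      have hled : ∀ t : ℝ≥0∞, (g n).toFun (Set.Iic t) ≤
          SimpleData.toFun ⟨d.m + 1, Fin.cons r (B k n),
            Fin.cons 0 (fun i => thr (d.x i) k), hdisj', hsup'⟩ (Set.Iic t) := by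
        intro s
        simp only [SimpleData.toFun]
        have hGsplit : (g n).toFun (Set.Iic s) =
            ((g n).toFun (Set.Iic s) ⊓ r) ⊔
              Finset.univ.sup (fun i => (g n).toFun (Set.Iic s) ⊓ B k n i) := by
          conv_lhs => rw [← inf_top_eq ((g n).toFun (Set.Iic s)), ← hsup']
          rw [hsupcons, inf_sup_left, Finset.sup_inf_distrib_left]
        rw [hGsplit]
        refine sup_le (inf_le_right.trans ?_) (Finset.sup_le fun i _ => ?_)
        · have h00 : (Fin.cons r (B k n) : Fin (d.m+1) → A) 0 = r := Fin.cons_zero _ _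
          refine le_trans (le_of_eq h00.symm) (Finset.le_sup ?_)
          simp [Fin.cons_zero]
        · by_cases hik : thr (d.x i) k ≤ s
          · refine inf_le_right.trans ?_
            have hsucc : (Fin.cons r (B k n) : Fin (d.m+1) → A) i.succ = B k n i :=
              Fin.cons_succ _ _ _
            refine le_trans (le_of_eq hsucc.symm) (Finset.le_sup ?_)
            simp [Fin.cons_succ, hik]
          · have hst : Set.Iic s ⊆ Set.Iic (thr (d.x i) k) :=
              Set.Iic_subset_Iic.mpr (le_of_lt (not_le.mp hik))
            have hmg : (g n).toFun (Set.Iic s) ≤ (g n).toFun (Set.Iic (thr (d.x i) k)) :=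
              aux_nnmeas_mono (g n) measurableSet_Iic measurableSet_Iic hst
            have hbb : (g n).toFun (Set.Iic s) ⊓ B k n i ≤
                (g n).toFun (Set.Iic (thr (d.x i) k)) ⊓
                  ((g n).toFun (Set.Iic (thr (d.x i) k)))ᶜ :=
              inf_le_inf hmg inf_le_right
            rw [inf_compl_eq_bot] at hbb
            exact hbb.trans bot_le
      refine le_trans ?_ (le_iSup (fun m => pfIntegral μ (g m).toFun) n)
      rw [pfIntegral]
      refine le_iSup₂_of_le ⟨d.m + 1, Fin.cons r (B k n),
        Fin.cons 0 (fun i => thr (d.x i) k), hdisj', hsup'⟩ hled (le_of_eq ?_)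
      show ∑ i, μ (B k n i) * thr (d.x i) k =
        ∑ j : Fin (d.m+1), μ ((Fin.cons r (B k n) : Fin (d.m+1) → A) j) *
          (Fin.cons 0 (fun i => thr (d.x i) k) : Fin (d.m+1) → ℝ≥0∞) j
      rw [Fin.sum_univ_succ]
      simp
    -- supremum over n for fixed k
    have claim3 : ∀ k, ⨆ n, ∑ i, μ (B k n i) * thr (d.x i) k =
        ∑ i, μ (d.a i) * thr (d.x i) k := by
      intro k
      rw [← ENNReal.finsetSum_iSup_of_monotone
        (f := fun i n => μ (B k n i) * thr (d.x i) k)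
        (fun i n1 n2 hn => mul_le_mul_left (aux_mono h0 hμ (hBmono k i hn)) _)]
      refine Finset.sum_congr rfl fun i _ => ?_
      by_cases hx : d.x i = 0
      · simp [hx, thr_zero]
      · rw [← ENNReal.iSup_mul, aux_continuity h0 hμ (hBmono k i) (hBlub k i hx)]
    have claim4 : ⨆ k, ∑ i, μ (d.a i) * thr (d.x i) k = ∑ i, μ (d.a i) * d.x i := by
      rw [← ENNReal.finsetSum_iSup_of_monotone
        (f := fun i k => μ (d.a i) * thr (d.x i) k)
        (fun i k1 k2 hk => mul_le_mul_right (thr_mono (d.x i) hk) _)]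
      refine Finset.sum_congr rfl fun i _ => ?_
      rw [← ENNReal.mul_iSup, thr_iSup]
    calc ∑ i, μ (d.a i) * d.x i = ⨆ k, ∑ i, μ (d.a i) * thr (d.x i) k := claim4.symm
      _ = ⨆ k, ⨆ n, ∑ i, μ (B k n i) * thr (d.x i) k := by
          exact iSup_congr fun k => (claim3 k).symm
      _ ≤ ⨆ n, pfIntegral μ (g n).toFun := iSup_le fun k => iSup_le fun n => claim1 k n
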